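/- arXiv:math/9902038 — 3 statements merged into one kernel-verified Lean document; each statement's English description precedes it below -/
import Mathlib

section
/- Let π : M → N be a C^1-smooth (or Lipschitz) map between finite-dimensional real normed spaces with dim N = e, and let E ⊆ M be a set with H^s(E) = 0 for some s ≥ e. Then for Lebesgue-almost all y ∈ N, the fiber slice satisfies H^{s-e}(E ∩ π^{-1}(y)) = 0. -/
open MeasureTheory Filter Set
open scoped ENNReal NNReal Topology

set_option maxHeartbeats 1000000

/-- Slicing of Hausdorff-null sets: if `π : ℝ^d → ℝ^e` is Lipschitz and
`H^s(E) = 0` for some `s ≥ e`, then for Lebesgue-almost every `y ∈ ℝ^e`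
the slice `E ∩ π⁻¹{y}` satisfies `H^{s-e}(E ∩ π⁻¹{y}) = 0`. -/
theorem hausdorff_null_slicing (d e : ℕ) (K : NNReal)
    (π : (Fin d → ℝ) → (Fin e → ℝ)) (hπ : LipschitzWith K π)
    (E : Set (Fin d → ℝ)) (s : ℝ) (hse : (e : ℝ) ≤ s) (hE : μH[s] E = 0) :
    ∀ᵐ y ∂(volume : Measure (Fin e → ℝ)), μH[s - e] (E ∩ π ⁻¹' {y}) = 0 := by
  rcases Nat.eq_zero_or_pos e with he | he
  · subst he
    refine Eventually.of_forall fun y => ?_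
    have h1 : μH[s - (0:ℕ)] (E ∩ π ⁻¹' {y}) ≤ μH[s] E := by
      rw [Nat.cast_zero, sub_zero]; exact measure_mono inter_subset_left
    exact le_antisymm (h1.trans_eq hE) zero_le
  have hs : (0:ℝ) < s := lt_of_lt_of_le (by exact_mod_cast he) hse
  have hts : (0:ℝ) ≤ s - e := sub_nonneg.mpr hse
  -- Step 1: covers
  have key : ∀ n : ℕ, ∃ U : ℕ → Set (Fin d → ℝ), (E ⊆ ⋃ i, U i) ∧
      (∀ i, EMetric.diam (U i) ≤ ((n : ℝ≥0∞) + 1)⁻¹) ∧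
      ∑' i, EMetric.diam (U i) ^ s ≤ 2⁻¹ ^ n := by
    intro n
    rw [Measure.hausdorffMeasure_apply] at hE
    have h0 : (0:ℝ≥0∞) < ((n : ℝ≥0∞) + 1)⁻¹ := ENNReal.inv_pos.mpr (by simp)
    have h1 : (⨅ (t : ℕ → Set (Fin d → ℝ)) (_ : E ⊆ ⋃ m, t m)
        (_ : ∀ m, EMetric.diam (t m) ≤ ((n : ℝ≥0∞) + 1)⁻¹),
        ∑' m, ⨆ _ : (t m).Nonempty, EMetric.diam (t m) ^ s) = 0 := by
      refine le_antisymm ?_ zero_le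
      rw [← hE]
      exact le_iSup₂ (f := fun r (_ : 0 < r) => ⨅ (t : ℕ → Set (Fin d → ℝ)) (_ : E ⊆ ⋃ m, t m)
        (_ : ∀ m, EMetric.diam (t m) ≤ r),
        ∑' m, ⨆ _ : (t m).Nonempty, EMetric.diam (t m) ^ s) _ h0
    have h2 : (⨅ (t : ℕ → Set (Fin d → ℝ)) (_ : E ⊆ ⋃ m, t m)
        (_ : ∀ m, EMetric.diam (t m) ≤ ((n : ℝ≥0∞) + 1)⁻¹),
        ∑' m, ⨆ _ : (t m).Nonempty, EMetric.diam (t m) ^ s) < 2⁻¹ ^ n := by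
      rw [h1]; exact ENNReal.pow_pos (by norm_num) n
    rw [iInf_lt_iff] at h2
    obtain ⟨t, h2⟩ := h2
    rw [iInf_lt_iff] at h2
    obtain ⟨hcov, h2⟩ := h2
    rw [iInf_lt_iff] at h2
    obtain ⟨hdiam, hsum⟩ := h2
    refine ⟨t, hcov, hdiam, le_trans (ENNReal.tsum_le_tsum fun m => ?_) hsum.le⟩
    rcases (t m).eq_empty_or_nonempty with hem | hne
    · simp [hem, EMetric.diam, ENNReal.zero_rpow_of_pos hs]
    · simp [hne]
  choose U hUcov hUdiam hUsum using key
  set f : ℕ → (Fin e → ℝ) → ℝ≥0∞ := fun n y =>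
    ∑' i, EMetric.diam (U n i) ^ (s - e) *
      (closure (π '' U n i)).indicator (fun _ => (1:ℝ≥0∞)) y with hf
  have hmeas1 : ∀ n i, Measurable fun y => EMetric.diam (U n i) ^ (s - e) *
      (closure (π '' U n i)).indicator (fun _ => (1:ℝ≥0∞)) y := fun n i =>
    (measurable_const.indicator isClosed_closure.measurableSet).const_mul _
  have hfmeas : ∀ n, Measurable (f n) := fun n => Measurable.ennreal_tsum (hmeas1 n)
  -- Step 2: pointwise bound
  have hpoint : ∀ y, μH[s - e] (E ∩ π ⁻¹' {y}) ≤ liminf (fun n => f n y) atTop := by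
    intro y
    rw [Measure.hausdorffMeasure_apply]
    refine iSup₂_le fun r hr => ?_
    obtain ⟨N, hN⟩ := ENNReal.exists_inv_nat_lt hr.ne'
    refine le_liminf_of_le (by isBoundedDefault) ?_
    filter_upwards [eventually_ge_atTop N] with m hm
    have hmr : ((m : ℝ≥0∞) + 1)⁻¹ ≤ r := by
      refine le_trans (ENNReal.inv_le_inv.mpr ?_) hN.le
      exact le_trans (by exact_mod_cast hm) le_self_add
    refine iInf_le_of_le (fun i => U m i ∩ π ⁻¹' {y}) ?_
    refine iInf_le_of_le (fun x hx => ?_) ?_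
    · obtain ⟨i, hi⟩ := mem_iUnion.mp (hUcov m hx.1)
      exact mem_iUnion.mpr ⟨i, hi, hx.2⟩
    refine iInf_le_of_le (fun i => le_trans
      (EMetric.diam_mono inter_subset_left) (le_trans (hUdiam m i) hmr)) ?_
    refine ENNReal.tsum_le_tsum fun i => iSup_le fun hne => ?_
    obtain ⟨x, hxU, hxy⟩ := hne
    have hy : y ∈ closure (π '' U m i) := subset_closure ⟨x, hxU, hxy⟩
    calc EMetric.diam (U m i ∩ π ⁻¹' {y}) ^ (s - e)
        ≤ EMetric.diam (U m i) ^ (s - e) :=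
          ENNReal.rpow_le_rpow (EMetric.diam_mono inter_subset_left) hts
      _ = EMetric.diam (U m i) ^ (s - e) *
          (closure (π '' U m i)).indicator (fun _ => (1:ℝ≥0∞)) y := by
          rw [Set.indicator_of_mem hy, mul_one]
  -- Step 3: integral bound
  have hint : ∀ n, ∫⁻ y, f n y ≤ ((K:ℝ≥0∞)) ^ (e:ℝ) * 2⁻¹ ^ n := by
    intro n
    have heq : ∫⁻ y, f n y = ∑' i, EMetric.diam (U n i) ^ (s - e) *
        volume (closure (π '' U n i)) := by
      rw [hf, lintegral_tsum (fun i => (hmeas1 n i).aemeasurable)]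
      congr 1
      ext i
      rw [lintegral_const_mul _ (measurable_const.indicator isClosed_closure.measurableSet),
        lintegral_indicator isClosed_closure.measurableSet]
      simp
    rw [heq]
    have hterm : ∀ i, EMetric.diam (U n i) ^ (s - e) * volume (closure (π '' U n i))
        ≤ (K:ℝ≥0∞) ^ (e:ℝ) * EMetric.diam (U n i) ^ s := by
      intro i
      have h1 : volume (closure (π '' U n i)) ≤
          ((K:ℝ≥0∞) * EMetric.diam (U n i)) ^ (e:ℝ) := by
        calc volume (closure (π '' U n i))
            ≤ EMetric.diam (closure (π '' U n i)) ^ Fintype.card (Fin e) :=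
              Real.volume_pi_le_diam_pow _
          _ = EMetric.diam (π '' U n i) ^ (e:ℝ) := by
              rw [show EMetric.diam (closure (π '' U n i)) = EMetric.diam (π '' U n i) from
                by exact Metric.ediam_closure .., ← ENNReal.rpow_natCast]; simp
          _ ≤ ((K:ℝ≥0∞) * EMetric.diam (U n i)) ^ (e:ℝ) :=
              ENNReal.rpow_le_rpow (hπ.ediam_image_le _) (by positivity)
      calc EMetric.diam (U n i) ^ (s - e) * volume (closure (π '' U n i))
          ≤ EMetric.diam (U n i) ^ (s - e) * ((K:ℝ≥0∞) * EMetric.diam (U n i)) ^ (e:ℝ) :=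
            mul_le_mul_right h1 _
        _ = (K:ℝ≥0∞) ^ (e:ℝ) * EMetric.diam (U n i) ^ s := by
            rw [ENNReal.mul_rpow_of_nonneg _ _ (by positivity),
              ← mul_assoc, mul_comm (EMetric.diam (U n i) ^ (s - e)) ((K:ℝ≥0∞) ^ (e:ℝ)),
              mul_assoc, ← ENNReal.rpow_add_of_nonneg _ _ hts (by positivity), sub_add_cancel]
    calc ∑' i, EMetric.diam (U n i) ^ (s - e) * volume (closure (π '' U n i))
        ≤ ∑' i, (K:ℝ≥0∞) ^ (e:ℝ) * EMetric.diam (U n i) ^ s :=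
          ENNReal.tsum_le_tsum hterm
      _ = (K:ℝ≥0∞) ^ (e:ℝ) * ∑' i, EMetric.diam (U n i) ^ s := ENNReal.tsum_mul_left
      _ ≤ (K:ℝ≥0∞) ^ (e:ℝ) * 2⁻¹ ^ n := mul_le_mul_right (hUsum n) _
  -- Step 4: conclude
  have hmain : ∫⁻ y, liminf (fun n => f n y) atTop = 0 := by
    refine le_antisymm ?_ zero_le
    calc ∫⁻ y, liminf (fun n => f n y) atTop
        ≤ liminf (fun n => ∫⁻ y, f n y) atTop := lintegral_liminf_le hfmeas
      _ ≤ liminf (fun n => (K:ℝ≥0∞) ^ (e:ℝ) * 2⁻¹ ^ n) atTop :=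
          liminf_le_liminf (Eventually.of_forall hint)
      _ = 0 := by
          have htend : Tendsto (fun n => (K:ℝ≥0∞) ^ (e:ℝ) * 2⁻¹ ^ n) atTop (𝓝 0) := by
            have h2 := ENNReal.tendsto_pow_atTop_nhds_zero_of_lt_one
              (by norm_num : (2⁻¹:ℝ≥0∞) < 1)
            simpa using ENNReal.Tendsto.const_mul h2
              (Or.inr (ENNReal.rpow_ne_top_of_nonneg (Nat.cast_nonneg e) ENNReal.coe_ne_top))
          exact htend.liminf_eq
  have hae := (lintegral_eq_zero_iff (Measurable.liminf hfmeas)).mp hmain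
  filter_upwards [hae] with y hy
  exact le_antisymm ((hpoint y).trans (le_of_eq hy)) zero_le
end

section
/- Let M be a connected C^1 manifold (or, as a tractable special case, a connected open subset of R^d with d ≥ 2) and let E ⊆ M be a closed set with H^{d-1}(E) = 0, where d = dim M. Then M \ E is connected (indeed locally connected: every point has a neighborhood basis U with U \ E connected). -/
open MeasureTheory

open Set ENNReal

lemma exists_cover {X : Type*} [EMetricSpace X] [MeasurableSpace X] [BorelSpace X]
    {γ : ℝ} (hγ : 0 < γ) {s : Set X} (hs : μH[γ] s = 0) {δ : ℝ≥0∞} (hδ : 0 < δ) :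
    ∃ t : ℕ → Set X, (s ⊆ ⋃ n, t n) ∧ (∀ n, EMetric.diam (t n) ≤ δ) ∧
      ∑' n, EMetric.diam (t n) ^ γ ≤ δ := by
  rw [MeasureTheory.Measure.hausdorffMeasure_apply] at hs
  have h1 : (⨅ (t : ℕ → Set X) (_ : s ⊆ ⋃ n, t n) (_ : ∀ n, EMetric.diam (t n) ≤ δ),
      ∑' n, ⨆ _ : (t n).Nonempty, EMetric.diam (t n) ^ γ) = 0 := by
    refine le_antisymm ?_ (zero_le)
    rw [← hs]
    exact le_iSup₂ (f := fun r (_ : 0 < r) => ⨅ (t : ℕ → Set X) (_ : s ⊆ ⋃ n, t n)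
      (_ : ∀ n, EMetric.diam (t n) ≤ r), ∑' n, ⨆ _ : (t n).Nonempty, EMetric.diam (t n) ^ γ) δ hδ
  have h2 : (⨅ (t : ℕ → Set X) (_ : s ⊆ ⋃ n, t n) (_ : ∀ n, EMetric.diam (t n) ≤ δ),
      ∑' n, ⨆ _ : (t n).Nonempty, EMetric.diam (t n) ^ γ) < δ := h1 ▸ hδ
  obtain ⟨t, ht⟩ := iInf_lt_iff.1 h2
  obtain ⟨hcov, ht⟩ := iInf_lt_iff.1 ht
  obtain ⟨hdiam, ht⟩ := iInf_lt_iff.1 ht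
  refine ⟨t, hcov, hdiam, le_of_eq_of_le ?_ ht.le⟩
  refine tsum_congr fun n => ?_
  rcases (t n).eq_empty_or_nonempty with h | h
  · simp [h, EMetric.diam, EMetric.diam_empty, ENNReal.zero_rpow_of_pos hγ]
  · simp [h]

lemma prod_Icc_null {X : Type*} [MetricSpace X] [MeasurableSpace X] [BorelSpace X]
    [SecondCountableTopology X]
    {γ : ℝ} (hγ : 1 ≤ γ) {s : Set X} (hs : μH[γ] s = 0) (u v : ℝ) :
    μH[γ + 1] (s ×ˢ Set.Icc u v) = 0 := by
  have hγ0 : (0:ℝ) < γ := lt_of_lt_of_le one_pos hγ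
  have hγ10 : (0:ℝ) < γ + 1 := by linarith
  rcases le_or_gt u v with huv | huv
  swap
  · rw [Set.Icc_eq_empty (not_le.2 huv), Set.prod_empty, measure_empty]
  set L : ℝ := v - u with hL
  have hL0 : 0 ≤ L := by simp [hL]; linarith
  -- the sequence of scales
  set δ : ℕ → ℝ := fun j => ((j : ℝ) + 1)⁻¹ with hδdef
  have hδpos : ∀ j, 0 < δ j := fun j => by positivity
  have hδle1 : ∀ j, δ j ≤ 1 := fun j => by
    rw [hδdef]
    simp only
    rw [inv_le_one_iff₀]
    right; linarith [Nat.cast_nonneg (α := ℝ) j]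
  have hδ0 : Filter.Tendsto δ Filter.atTop (nhds 0) := by
    simpa [hδdef] using tendsto_one_div_add_atTop_nhds_zero_nat (𝕜 := ℝ)
  -- choose covers at each scale
  have hcov : ∀ j : ℕ, ∃ t : ℕ → Set X, (s ⊆ ⋃ n, t n) ∧
      (∀ n, EMetric.diam (t n) ≤ ENNReal.ofReal (δ j)) ∧
      ∑' n, EMetric.diam (t n) ^ γ ≤ ENNReal.ofReal (δ j) :=
    fun j => exists_cover hγ0 hs (ENNReal.ofReal_pos.2 (hδpos j))
  choose t htcov htdiam htsum using hcov
  -- side lengths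
  set ℓ : ℕ → ℕ → ℝ := fun j n => max ((EMetric.diam (t j n)).toReal) (δ j * (2:ℝ)⁻¹ ^ n) with hℓdef
  have hℓpos : ∀ j n, 0 < ℓ j n := fun j n =>
    lt_max_of_lt_right (by positivity)
  have hdiam_ne_top : ∀ j n, EMetric.diam (t j n) ≠ ∞ := fun j n =>
    ne_top_of_le_ne_top ENNReal.ofReal_ne_top (htdiam j n)
  have hℓle : ∀ j n, ℓ j n ≤ δ j := by
    intro j n
    apply max_le
    · rw [← ENNReal.ofReal_le_ofReal_iff (hδpos j).le, ENNReal.ofReal_toReal (hdiam_ne_top j n)]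
      exact htdiam j n
    · calc δ j * (2:ℝ)⁻¹ ^ n ≤ δ j * 1 := by
            gcongr
            exact pow_le_one₀ (by norm_num) (by norm_num)
        _ = δ j := mul_one _
  have hdiamℓ : ∀ j n, EMetric.diam (t j n) ≤ ENNReal.ofReal (ℓ j n) := by
    intro j n
    rw [← ENNReal.ofReal_toReal (hdiam_ne_top j n)]
    exact ENNReal.ofReal_le_ofReal (le_max_left _ _)
  -- number of boxes
  set N : ℕ → ℕ → ℕ := fun j n => ⌈L / ℓ j n⌉₊ with hNdef
  -- the covering family
  set T : ℕ → ℕ × ℕ → Set (X × ℝ) := fun j p =>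
    if p.2 ≤ N j p.1 then
      (t j p.1) ×ˢ Set.Icc (u + p.2 * ℓ j p.1) (u + (p.2 + 1) * ℓ j p.1)
    else ∅ with hTdef
  -- diameter bound for boxes
  have hTdiam' : ∀ j n k, EMetric.diam
      ((t j n) ×ˢ Set.Icc (u + (k:ℝ) * ℓ j n) (u + ((k:ℝ) + 1) * ℓ j n)) ≤
        ENNReal.ofReal (ℓ j n) := by
    intro j n k
    apply EMetric.diam_le
    rintro ⟨x, y⟩ ⟨hx, hy⟩ ⟨x', y'⟩ ⟨hx', hy'⟩
    rw [Prod.edist_eq]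
    apply max_le
    · exact le_trans (EMetric.edist_le_diam_of_mem hx hx') (hdiamℓ j n)
    · refine le_trans (EMetric.edist_le_diam_of_mem hy hy') ?_
      rw [Real.ediam_Icc]
      apply ENNReal.ofReal_le_ofReal
      ring_nf
      exact le_refl _
  have hTdiam : ∀ j p, EMetric.diam (T j p) ≤ ENNReal.ofReal (δ j) := by
    rintro j ⟨n, k⟩
    rw [hTdef]
    dsimp only
    split
    · exact le_trans (hTdiam' j n k) (ENNReal.ofReal_le_ofReal (hℓle j n))
    · simp [EMetric.diam]
  -- coverage
  have hTcov : ∀ j, s ×ˢ Set.Icc u v ⊆ ⋃ p : ℕ × ℕ, T j p := by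
    intro j
    rintro ⟨x, y⟩ ⟨hx, hy⟩
    obtain ⟨n, hn⟩ : ∃ n, x ∈ t j n := by
      have := htcov j hx
      simpa using this
    set k : ℕ := ⌊(y - u) / ℓ j n⌋₊ with hk
    have hy0 : 0 ≤ y - u := by linarith [hy.1]
    have hkN : k ≤ N j n := by
      rw [hk, hNdef]
      calc ⌊(y - u) / ℓ j n⌋₊ ≤ ⌈(y - u) / ℓ j n⌉₊ := Nat.floor_le_ceil _
        _ ≤ ⌈L / ℓ j n⌉₊ := by
            apply Nat.ceil_le_ceil
            gcongr
            linarith [hy.2]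
    refine Set.mem_iUnion.2 ⟨(n, k), ?_⟩
    rw [hTdef]
    dsimp only
    rw [if_pos hkN]
    refine ⟨hn, ?_, ?_⟩
    · have h1 : (k : ℝ) ≤ (y - u) / ℓ j n := Nat.floor_le (by positivity)
      have h2 : (k : ℝ) * ℓ j n ≤ y - u := by
        rw [← div_mul_cancel₀ (y - u) (hℓpos j n).ne']
        exact mul_le_mul_of_nonneg_right h1 (hℓpos j n).le
      linarith
    · have h1 : (y - u) / ℓ j n < (k : ℝ) + 1 := Nat.lt_floor_add_one _
      have h2 : y - u < ((k : ℝ) + 1) * ℓ j n := by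
        rw [← div_mul_cancel₀ (y - u) (hℓpos j n).ne']
        exact mul_lt_mul_of_pos_right h1 (hℓpos j n)
      linarith
  -- per-row sum bound
  have hrow : ∀ j n, ∑' k : ℕ, EMetric.diam (T j (n, k)) ^ (γ + 1) ≤
      ENNReal.ofReal ((L + 2 * δ j) * ℓ j n ^ γ) := by
    intro j n
    have hterm : ∀ k : ℕ, EMetric.diam (T j (n, k)) ^ (γ + 1) ≤
        (if k ≤ N j n then ENNReal.ofReal (ℓ j n ^ (γ + 1)) else 0) := by
      intro k
      rw [hTdef]
      dsimp only
      split
      · rw [← ENNReal.ofReal_rpow_of_pos (hℓpos j n)]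
        exact ENNReal.rpow_le_rpow (hTdiam' j n k) hγ10.le
      · simp [EMetric.diam, EMetric.diam_empty, ENNReal.zero_rpow_of_pos hγ10]
    have hs1 : ℓ j n ^ (γ + 1) = ℓ j n ^ γ * ℓ j n := by
      rw [Real.rpow_add (hℓpos j n), Real.rpow_one]
    calc ∑' k : ℕ, EMetric.diam (T j (n, k)) ^ (γ + 1)
        ≤ ∑' k : ℕ, (if k ≤ N j n then ENNReal.ofReal (ℓ j n ^ (γ + 1)) else 0) :=
          ENNReal.tsum_le_tsum hterm
      _ = ∑ k ∈ Finset.range (N j n + 1),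
            (if k ≤ N j n then ENNReal.ofReal (ℓ j n ^ (γ + 1)) else 0) := by
          apply tsum_eq_sum
          intro k hk
          rw [if_neg]
          simp only [Finset.mem_range] at hk
          omega
      _ = (↑(N j n + 1) : ℝ≥0∞) * ENNReal.ofReal (ℓ j n ^ (γ + 1)) := by
          rw [Finset.sum_congr rfl (fun k hk => if_pos (by
            simp only [Finset.mem_range] at hk; omega))]
          simp [Finset.sum_const, nsmul_eq_mul]
      _ ≤ ENNReal.ofReal ((L + 2 * δ j) * ℓ j n ^ γ) := by
          rw [← ENNReal.ofReal_natCast, ← ENNReal.ofReal_mul (by positivity)]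
          apply ENNReal.ofReal_le_ofReal
          have hN : ((N j n : ℝ) + 1) ≤ L / ℓ j n + 2 := by
            have h1 : (N j n : ℝ) < L / ℓ j n + 1 := by
              rw [hNdef]
              exact Nat.ceil_lt_add_one (by positivity)
            linarith
          have hpow : (0:ℝ) ≤ ℓ j n ^ (γ + 1) := (Real.rpow_nonneg (hℓpos j n).le _)
          calc ((N j n + 1 : ℕ) : ℝ) * ℓ j n ^ (γ + 1)
              ≤ (L / ℓ j n + 2) * ℓ j n ^ (γ + 1) := by
                apply mul_le_mul_of_nonneg_right ?_ hpow
                push_cast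
                exact hN
            _ = L * ℓ j n ^ γ + 2 * (ℓ j n ^ γ * ℓ j n) := by
                rw [hs1]
                field_simp [(hℓpos j n).ne']
            _ ≤ (L + 2 * δ j) * ℓ j n ^ γ := by
                nlinarith [Real.rpow_nonneg (hℓpos j n).le γ, hℓle j n,
                  (hℓpos j n).le, hδpos j]
  -- the geometric-series tail
  have hgeom : ∀ j, ∑' n : ℕ, ENNReal.ofReal ((δ j * (2:ℝ)⁻¹ ^ n) ^ γ) ≤
      ENNReal.ofReal (δ j) * 2 := by
    intro j
    have hq : ((2:ℝ)⁻¹) ^ γ ≤ 2⁻¹ := by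
      calc ((2:ℝ)⁻¹) ^ γ ≤ ((2:ℝ)⁻¹) ^ (1:ℝ) :=
            Real.rpow_le_rpow_of_exponent_ge (by norm_num) (by norm_num) hγ
        _ = 2⁻¹ := Real.rpow_one _
    have hq0 : (0:ℝ) ≤ ((2:ℝ)⁻¹) ^ γ := Real.rpow_nonneg (by norm_num) _
    have hterm : ∀ n : ℕ, ENNReal.ofReal ((δ j * (2:ℝ)⁻¹ ^ n) ^ γ) =
        ENNReal.ofReal (δ j ^ γ) * (ENNReal.ofReal (((2:ℝ)⁻¹) ^ γ)) ^ n := by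
      intro n
      have h1 : ((2:ℝ)⁻¹ ^ n) ^ γ = (((2:ℝ)⁻¹) ^ γ) ^ n := by
        rw [← Real.rpow_natCast ((2:ℝ)⁻¹) n, ← Real.rpow_natCast (((2:ℝ)⁻¹) ^ γ) n,
          ← Real.rpow_mul (by norm_num), ← Real.rpow_mul (by norm_num), mul_comm]
      rw [Real.mul_rpow (hδpos j).le (by positivity), h1,
        ENNReal.ofReal_mul (Real.rpow_nonneg (hδpos j).le _), ENNReal.ofReal_pow hq0]
    rw [tsum_congr hterm, ENNReal.tsum_mul_left, ENNReal.tsum_geometric]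
    have hδγ : ENNReal.ofReal (δ j ^ γ) ≤ ENNReal.ofReal (δ j) := by
      apply ENNReal.ofReal_le_ofReal
      calc δ j ^ γ ≤ δ j ^ (1:ℝ) :=
            Real.rpow_le_rpow_of_exponent_ge (hδpos j) (hδle1 j) hγ
        _ = δ j := Real.rpow_one _
    have hinv : (1 - ENNReal.ofReal (((2:ℝ)⁻¹) ^ γ))⁻¹ ≤ 2 := by
      have h2 : ENNReal.ofReal (((2:ℝ)⁻¹) ^ γ) ≤ 2⁻¹ := by
        calc ENNReal.ofReal (((2:ℝ)⁻¹) ^ γ) ≤ ENNReal.ofReal 2⁻¹ :=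
              ENNReal.ofReal_le_ofReal hq
          _ = 2⁻¹ := by
              rw [ENNReal.ofReal_inv_of_pos (by norm_num)]
              norm_num
      have h3 : (2:ℝ≥0∞)⁻¹ ≤ 1 - ENNReal.ofReal (((2:ℝ)⁻¹) ^ γ) := by
        have h4 := tsub_le_tsub_left h2 (1 : ℝ≥0∞)
        rw [ENNReal.one_sub_inv_two] at h4
        exact h4
      calc (1 - ENNReal.ofReal (((2:ℝ)⁻¹) ^ γ))⁻¹ ≤ ((2:ℝ≥0∞)⁻¹)⁻¹ :=
            ENNReal.inv_le_inv.2 h3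
        _ = 2 := by rw [inv_inv]
    exact mul_le_mul' hδγ hinv
  -- the ℓ^γ sums
  have hℓsum : ∀ j, ∑' n : ℕ, ENNReal.ofReal (ℓ j n ^ γ) ≤ 3 * ENNReal.ofReal (δ j) := by
    intro j
    have hterm : ∀ n : ℕ, ENNReal.ofReal (ℓ j n ^ γ) ≤
        EMetric.diam (t j n) ^ γ + ENNReal.ofReal ((δ j * (2:ℝ)⁻¹ ^ n) ^ γ) := by
      intro n
      have hcases : ℓ j n ^ γ ≤ (EMetric.diam (t j n)).toReal ^ γ + (δ j * (2:ℝ)⁻¹ ^ n) ^ γ := by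
        rw [hℓdef]
        dsimp only
        rcases max_cases ((EMetric.diam (t j n)).toReal) (δ j * (2:ℝ)⁻¹ ^ n) with ⟨h, _⟩ | ⟨h, _⟩ <;>
          rw [h]
        · nlinarith [Real.rpow_nonneg (mul_nonneg (hδpos j).le
            (pow_nonneg (by norm_num : (0:ℝ) ≤ 2⁻¹) n)) γ]
        · nlinarith [Real.rpow_nonneg (ENNReal.toReal_nonneg (a := EMetric.diam (t j n))) γ]
      have hdr : ENNReal.ofReal ((EMetric.diam (t j n)).toReal ^ γ) = EMetric.diam (t j n) ^ γ := by
        rcases eq_or_ne (EMetric.diam (t j n)) 0 with h0 | h0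
        · rw [h0]
          simp [ENNReal.zero_rpow_of_pos hγ0, Real.zero_rpow hγ0.ne']
        · have hpos : 0 < (EMetric.diam (t j n)).toReal :=
            ENNReal.toReal_pos h0 (hdiam_ne_top j n)
          rw [← ENNReal.ofReal_rpow_of_pos hpos, ENNReal.ofReal_toReal (hdiam_ne_top j n)]
      calc ENNReal.ofReal (ℓ j n ^ γ)
          ≤ ENNReal.ofReal ((EMetric.diam (t j n)).toReal ^ γ + (δ j * (2:ℝ)⁻¹ ^ n) ^ γ) :=
            ENNReal.ofReal_le_ofReal hcases
        _ ≤ ENNReal.ofReal ((EMetric.diam (t j n)).toReal ^ γ) +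
              ENNReal.ofReal ((δ j * (2:ℝ)⁻¹ ^ n) ^ γ) := ENNReal.ofReal_add_le
        _ = EMetric.diam (t j n) ^ γ + ENNReal.ofReal ((δ j * (2:ℝ)⁻¹ ^ n) ^ γ) := by rw [hdr]
    calc ∑' n : ℕ, ENNReal.ofReal (ℓ j n ^ γ)
        ≤ ∑' n : ℕ, (EMetric.diam (t j n) ^ γ + ENNReal.ofReal ((δ j * (2:ℝ)⁻¹ ^ n) ^ γ)) :=
          ENNReal.tsum_le_tsum hterm
      _ = (∑' n : ℕ, EMetric.diam (t j n) ^ γ) +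
            ∑' n : ℕ, ENNReal.ofReal ((δ j * (2:ℝ)⁻¹ ^ n) ^ γ) := ENNReal.tsum_add
      _ ≤ ENNReal.ofReal (δ j) + ENNReal.ofReal (δ j) * 2 := add_le_add (htsum j) (hgeom j)
      _ = 3 * ENNReal.ofReal (δ j) := by ring
  -- total sum bound
  have hsum : ∀ j, ∑' p : ℕ × ℕ, EMetric.diam (T j p) ^ (γ + 1) ≤
      ENNReal.ofReal (L + 2) * (3 * ENNReal.ofReal (δ j)) := by
    intro j
    have hpr : ∑' p : ℕ × ℕ, EMetric.diam (T j p) ^ (γ + 1)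
        = ∑' n : ℕ, ∑' k : ℕ, EMetric.diam (T j (n, k)) ^ (γ + 1) :=
      ENNReal.tsum_prod (f := fun n k => EMetric.diam (T j (n, k)) ^ (γ + 1))
    rw [hpr]
    calc ∑' n : ℕ, ∑' k : ℕ, EMetric.diam (T j (n, k)) ^ (γ + 1)
        ≤ ∑' n : ℕ, ENNReal.ofReal ((L + 2 * δ j) * ℓ j n ^ γ) :=
          ENNReal.tsum_le_tsum (fun n => hrow j n)
      _ = ∑' n : ℕ, ENNReal.ofReal (L + 2 * δ j) * ENNReal.ofReal (ℓ j n ^ γ) := by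
          refine tsum_congr fun n => ?_
          rw [← ENNReal.ofReal_mul (by positivity)]
      _ = ENNReal.ofReal (L + 2 * δ j) * ∑' n : ℕ, ENNReal.ofReal (ℓ j n ^ γ) :=
          ENNReal.tsum_mul_left
      _ ≤ ENNReal.ofReal (L + 2) * (3 * ENNReal.ofReal (δ j)) := by
          apply mul_le_mul'
          · exact ENNReal.ofReal_le_ofReal (by linarith [hδle1 j, hδpos j])
          · exact hℓsum j
  -- conclusion
  have hr0 : Filter.Tendsto (fun j : ℕ => ENNReal.ofReal (δ j)) Filter.atTop (nhds 0) := by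
    rw [← ENNReal.ofReal_zero]
    exact ENNReal.tendsto_ofReal hδ0
  have main := MeasureTheory.Measure.hausdorffMeasure_le_liminf_tsum (γ + 1) (s ×ˢ Set.Icc u v)
    (fun j : ℕ => ENNReal.ofReal (δ j)) hr0 T
    (Filter.Eventually.of_forall hTdiam) (Filter.Eventually.of_forall hTcov)
  refine le_antisymm (le_trans main ?_) (zero_le)
  have hb := Filter.liminf_le_liminf (f := Filter.atTop) (Filter.Eventually.of_forall hsum)
    (by isBoundedDefault) (by isBoundedDefault)
  have h1 : Filter.Tendsto (fun j : ℕ => (3:ℝ≥0∞) * ENNReal.ofReal (δ j))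
      Filter.atTop (nhds (3 * 0)) :=
    ENNReal.Tendsto.const_mul hr0 (Or.inr (by norm_num))
  have h2 := ENNReal.Tendsto.const_mul (a := ENNReal.ofReal (L + 2)) h1
    (Or.inr ENNReal.ofReal_ne_top)
  have hT2 : Filter.Tendsto (fun j : ℕ => ENNReal.ofReal (L + 2) * (3 * ENNReal.ofReal (δ j)))
      Filter.atTop (nhds 0) := by simpa using h2
  exact le_trans hb (le_of_eq hT2.liminf_eq)

lemma ball_joined {d : ℕ} (hd : 2 ≤ d) (c : Fin d → ℝ) {r : ℝ} (hr : 0 < r)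
    {s : Set (Fin d → ℝ)} (hscl : IsClosed s) (hsb : s ⊆ Metric.closedBall c r)
    (hs : μH[(d:ℝ) - 1] s = 0)
    {a b : Fin d → ℝ} (ha : a ∈ Metric.ball c r \ s) (hb : b ∈ Metric.ball c r \ s) :
    JoinedIn (Metric.ball c r \ s) a b := by
  have hvol : (volume : Measure (Fin d → ℝ)) = μH[(d:ℝ)] := by
    rw [← MeasureTheory.hausdorffMeasure_pi_real (ι := Fin d)]
    simp
  rcases s.eq_empty_or_nonempty with hes | hes
  · apply JoinedIn.of_segment_subset
    rw [hes]
    intro z hz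
    exact ⟨(convex_ball c r).segment_subset ha.1 hb.1 hz, notMem_empty z⟩
  -- bad sets are null
  have hbad : ∀ p : Fin d → ℝ, p ∈ Metric.ball c r \ s →
      volume {w ∈ Metric.ball c r | (segment ℝ p w ∩ s).Nonempty} = 0 := by
    rintro p ⟨hpball, hps⟩
    set δ : ℝ := Metric.infDist p s with hδdef
    have hδ : 0 < δ := (hscl.notMem_iff_infDist_pos hes).1 hps
    have hδle : δ ≤ 2 * r := by
      obtain ⟨e, he⟩ := hes
      calc δ ≤ dist p e := Metric.infDist_le_dist_of_mem he
        _ ≤ dist p c + dist c e := dist_triangle _ _ _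
        _ ≤ r + r := add_le_add hpball.le (by
            rw [dist_comm]; exact (hsb he))
        _ = 2 * r := by ring
    set T : ℝ := 2 * r / δ with hTdef
    have hT1 : 1 ≤ T := (one_le_div hδ).2 hδle
    have hT0 : 0 < T := lt_of_lt_of_le one_pos hT1
    set F : (Fin d → ℝ) × ℝ → (Fin d → ℝ) := fun q => p + q.2 • (q.1 - p) with hFdef
    set K : NNReal := Real.toNNReal (T + 2 * r) with hKdef
    have hlip : LipschitzOnWith K F (s ×ˢ Set.Icc 1 T) := by
      apply LipschitzOnWith.of_dist_le_mul
      rintro ⟨x, tx⟩ ⟨hx, htx⟩ ⟨y, ty⟩ ⟨hy, hty⟩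
      have h1 : F (x, tx) - F (y, ty) = tx • (x - y) + (tx - ty) • (y - p) := by
        rw [hFdef]; dsimp only; module
      have hxy : dist (F (x, tx)) (F (y, ty)) ≤ T * dist x y + 2 * r * dist tx ty := by
        rw [dist_eq_norm, h1]
        calc ‖tx • (x - y) + (tx - ty) • (y - p)‖
            ≤ ‖tx • (x - y)‖ + ‖(tx - ty) • (y - p)‖ := norm_add_le _ _
          _ = |tx| * ‖x - y‖ + |tx - ty| * ‖y - p‖ := by
              rw [norm_smul, norm_smul, Real.norm_eq_abs, Real.norm_eq_abs]
          _ ≤ T * ‖x - y‖ + |tx - ty| * (2 * r) := by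
              have e1 : |tx| ≤ T := by
                rw [abs_of_nonneg (le_trans zero_le_one htx.1)]
                exact htx.2
              have e2 : ‖y - p‖ ≤ 2 * r := by
                calc ‖y - p‖ = dist y p := (dist_eq_norm _ _).symm
                  _ ≤ dist y c + dist c p := dist_triangle _ _ _
                  _ ≤ r + r := add_le_add (hsb hy) (by rw [dist_comm]; exact hpball.le)
                  _ = 2 * r := by ring
              exact add_le_add (mul_le_mul_of_nonneg_right e1 (norm_nonneg _))
                (mul_le_mul_of_nonneg_left e2 (abs_nonneg _))
          _ = T * dist x y + 2 * r * dist tx ty := by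
              rw [dist_eq_norm, Real.dist_eq]
              ring
      calc dist (F (x, tx)) (F (y, ty)) ≤ T * dist x y + 2 * r * dist tx ty := hxy
        _ ≤ T * dist ((x, tx)) ((y, ty)) + 2 * r * dist ((x, tx)) ((y, ty)) := by
            have e1 : dist x y ≤ dist ((x, tx)) ((y, ty)) := by
              rw [Prod.dist_eq]; exact le_max_left _ _
            have e2 : dist tx ty ≤ dist ((x, tx)) ((y, ty)) := by
              rw [Prod.dist_eq]; exact le_max_right _ _
            exact add_le_add (mul_le_mul_of_nonneg_left e1 hT0.le)
              (mul_le_mul_of_nonneg_left e2 (by positivity))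
        _ = (K : ℝ) * dist ((x, tx)) ((y, ty)) := by
            rw [hKdef, Real.coe_toNNReal _ (by positivity)]
            ring
    have hγ : (1:ℝ) ≤ (d:ℝ) - 1 := by
      have : (2:ℝ) ≤ (d:ℝ) := by exact_mod_cast hd
      linarith
    have hprodnull : μH[(d:ℝ)] (s ×ˢ Set.Icc (1:ℝ) T) = 0 := by
      have h := prod_Icc_null hγ hs 1 T
      rw [show (d:ℝ) - 1 + 1 = (d:ℝ) by ring] at h
      exact h
    have him : μH[(d:ℝ)] (F '' (s ×ˢ Set.Icc 1 T)) = 0 := by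
      refine le_antisymm ?_ (zero_le)
      calc μH[(d:ℝ)] (F '' (s ×ˢ Set.Icc 1 T))
          ≤ (K : ℝ≥0∞) ^ (d:ℝ) * μH[(d:ℝ)] (s ×ˢ Set.Icc 1 T) :=
            hlip.hausdorffMeasure_image_le (by positivity)
        _ = 0 := by rw [hprodnull, mul_zero]
    have hsub : {w ∈ Metric.ball c r | (segment ℝ p w ∩ s).Nonempty} ⊆
        F '' (s ×ˢ Set.Icc 1 T) := by
      rintro w ⟨hwball, e, heseg, hes'⟩
      rw [segment_eq_image' ℝ p w] at heseg
      obtain ⟨u, ⟨hu0, hu1⟩, hue⟩ := heseg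
      have hpe : δ ≤ ‖e - p‖ := by
        rw [← dist_eq_norm, dist_comm]
        exact Metric.infDist_le_dist_of_mem hes'
      have hnorm : ‖e - p‖ = u * ‖w - p‖ := by
        rw [← hue]
        simp [norm_smul, abs_of_nonneg hu0]
      have hu0' : 0 < u := by
        rcases lt_or_eq_of_le hu0 with h | h
        · exact h
        · exfalso
          rw [← h] at hnorm
          simp at hnorm
          rw [hnorm] at hpe
          simp at hpe
          linarith
      have hwp2r : ‖w - p‖ < 2 * r := by
        rw [← dist_eq_norm]
        calc dist w p ≤ dist w c + dist c p := dist_triangle _ _ _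
          _ < r + r := add_lt_add hwball (by rw [dist_comm]; exact hpball)
          _ = 2 * r := by ring
      have hwp0 : 0 < ‖w - p‖ := by
        rcases (norm_nonneg (w - p)).lt_or_eq with h | h
        · exact h
        · exfalso
          rw [hnorm, ← h, mul_zero] at hpe
          linarith
      refine ⟨(e, u⁻¹), ⟨hes', ?_, ?_⟩, ?_⟩
      · exact (one_le_inv₀ hu0').2 hu1
      · -- u⁻¹ ≤ T
        have hui : u⁻¹ = ‖w - p‖ / ‖e - p‖ := by
          rw [hnorm]
          field_simp
        rw [hui, hTdef]
        apply div_le_div₀ (by positivity) hwp2r.le hδ hpe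
      · -- F (e, u⁻¹) = w
        rw [hFdef]
        dsimp only
        rw [← hue]
        rw [show p + u • (w - p) - p = u • (w - p) by abel, smul_smul,
          inv_mul_cancel₀ hu0'.ne', one_smul]
        abel
    refine le_antisymm ?_ (zero_le)
    calc volume {w ∈ Metric.ball c r | (segment ℝ p w ∩ s).Nonempty}
        ≤ volume (F '' (s ×ˢ Set.Icc 1 T)) := measure_mono hsub
      _ = 0 := by rw [hvol]; exact him
  -- pick a good midpoint
  have hpos : 0 < volume (Metric.ball c r) := Metric.measure_ball_pos volume c hr
  set W : Set (Fin d → ℝ) := {w ∈ Metric.ball c r | (segment ℝ a w ∩ s).Nonempty} ∪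
      {w ∈ Metric.ball c r | (segment ℝ b w ∩ s).Nonempty} with hWdef
  have hWnull : volume W = 0 := by
    refine le_antisymm ?_ (zero_le)
    calc volume W ≤ volume {w ∈ Metric.ball c r | (segment ℝ a w ∩ s).Nonempty} +
        volume {w ∈ Metric.ball c r | (segment ℝ b w ∩ s).Nonempty} := measure_union_le _ _
      _ = 0 := by rw [hbad a ha, hbad b hb, add_zero]
  have hne : (Metric.ball c r \ W).Nonempty := by
    by_contra h
    rw [Set.not_nonempty_iff_eq_empty, Set.diff_eq_empty] at h
    have := measure_mono (μ := volume) h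
    rw [hWnull] at this
    exact absurd (le_antisymm this (zero_le)) hpos.ne'
  obtain ⟨w, hwball, hwW⟩ := hne
  rw [hWdef] at hwW
  simp only [Set.mem_union, Set.mem_setOf_eq, not_or, not_and] at hwW
  have hseg : ∀ p : Fin d → ℝ, p ∈ Metric.ball c r →
      ¬(segment ℝ p w ∩ s).Nonempty → segment ℝ p w ⊆ Metric.ball c r \ s := by
    intro p hp hns z hz
    refine ⟨(convex_ball c r).segment_subset hp hwball hz, fun hzs => hns ⟨z, hz, hzs⟩⟩
  have J1 : JoinedIn (Metric.ball c r \ s) a w :=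
    JoinedIn.of_segment_subset (hseg a ha.1 (hwW.1 hwball))
  have J2 : JoinedIn (Metric.ball c r \ s) b w :=
    JoinedIn.of_segment_subset (hseg b hb.1 (hwW.2 hwball))
  exact J1.trans J2.symm

/-- Let `Ω ⊆ ℝ^d` (`d ≥ 2`) be a connected open set and let `E ⊆ Ω` be closed in `Ω`
with `H^{d-1}(E) = 0`.  Then `Ω \ E` is connected. -/
theorem connected_of_hausdorff_null_removed (d : ℕ) (hd : 2 ≤ d)
    (Ω E : Set (Fin d → ℝ)) (hΩ : IsOpen Ω) (hconn : IsConnected Ω)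
    (hEΩ : E ⊆ Ω) (hEclosed : IsOpen (Ω \ E))
    (hE : μH[(d : ℝ) - 1] E = 0) :
    IsConnected (Ω \ E) := by
  have hvol : (volume : Measure (Fin d → ℝ)) = μH[(d:ℝ)] := by
    rw [← MeasureTheory.hausdorffMeasure_pi_real (ι := Fin d)]
    simp
  have hvolE : volume E = 0 := by
    have h1 : μH[(d:ℝ)] E ≤ μH[(d:ℝ) - 1] E :=
      MeasureTheory.Measure.hausdorffMeasure_mono (by linarith) E
    rw [hvol]
    exact le_antisymm (hE ▸ h1) (zero_le)
  -- E-free points are dense in any nonempty open set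
  have hdense : ∀ U : Set (Fin d → ℝ), IsOpen U → U.Nonempty → (U \ E).Nonempty := by
    intro U hU hUne
    by_contra h
    rw [Set.not_nonempty_iff_eq_empty, Set.diff_eq_empty] at h
    have h1 : volume U = 0 := le_antisymm (le_trans (measure_mono h) hvolE.le) (zero_le)
    exact absurd h1 (hU.measure_pos volume hUne).ne'
  -- joinedness within small balls
  have hball : ∀ (x : Fin d → ℝ) (ε : ℝ), 0 < ε → Metric.closedBall x ε ⊆ Ω →
      ∀ p q, p ∈ Metric.ball x ε \ E → q ∈ Metric.ball x ε \ E →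
        JoinedIn (Ω \ E) p q := by
    intro x ε hε hsub p q hp hq
    set s : Set (Fin d → ℝ) := E ∩ Metric.closedBall x ε with hsdef
    have hscl : IsClosed s := by
      have : s = Metric.closedBall x ε ∩ (Ω \ E)ᶜ := by
        ext z
        simp only [hsdef, Set.mem_inter_iff, Set.mem_compl_iff, Set.mem_diff, not_and, not_not]
        constructor
        · rintro ⟨hzE, hzb⟩; exact ⟨hzb, fun _ => hzE⟩
        · rintro ⟨hzb, hz⟩; exact ⟨hz (hsub hzb), hzb⟩
      rw [this]
      exact Metric.isClosed_closedBall.inter hEclosed.isClosed_compl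
    have hsnull : μH[(d:ℝ) - 1] s = 0 :=
      measure_mono_null Set.inter_subset_left hE
    have hmem : ∀ z, z ∈ Metric.ball x ε \ E ↔ z ∈ Metric.ball x ε \ s := by
      intro z
      simp only [Set.mem_diff, hsdef, Set.mem_inter_iff]
      constructor
      · rintro ⟨h1, h2⟩; exact ⟨h1, fun hc => h2 hc.1⟩
      · rintro ⟨h1, h2⟩; exact ⟨h1, fun hc => h2 ⟨hc, Metric.ball_subset_closedBall h1⟩⟩
    have hJ : JoinedIn (Metric.ball x ε \ s) p q :=
      ball_joined hd x hε hscl Set.inter_subset_right hsnull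
        ((hmem p).1 hp) ((hmem q).1 hq)
    apply hJ.mono
    intro z hz
    have := (hmem z).2 hz
    exact ⟨hsub (Metric.ball_subset_closedBall this.1), this.2⟩
  -- a base point
  obtain ⟨x₀, hx₀⟩ := hconn.nonempty
  obtain ⟨ε₀, hε₀, hball₀⟩ : ∃ ε > 0, Metric.ball x₀ ε ⊆ Ω :=
    Metric.isOpen_iff.1 hΩ x₀ hx₀
  obtain ⟨a, haball, haE⟩ := hdense (Metric.ball x₀ ε₀) Metric.isOpen_ball
    (Metric.nonempty_ball.2 hε₀)
  have haΩE : a ∈ Ω \ E := ⟨hball₀ haball, haE⟩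
  -- the good set
  set T : Set (Fin d → ℝ) := {x ∈ Ω | ∃ ε > 0, Metric.closedBall x ε ⊆ Ω ∧
      ∀ q ∈ Metric.ball x ε \ E, JoinedIn (Ω \ E) a q} with hTdef
  have hTopen : IsOpen T := by
    rw [Metric.isOpen_iff]
    rintro x ⟨hxΩ, ε, hε, hsub, hjoin⟩
    refine ⟨ε / 2, by positivity, ?_⟩
    rintro y hy
    have hyball : y ∈ Metric.ball x ε := by
      rw [Metric.mem_ball] at hy ⊢
      linarith
    refine ⟨hsub (Metric.ball_subset_closedBall hyball), ε / 2, by positivity, ?_, ?_⟩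
    · intro z hz
      apply hsub
      rw [Metric.mem_closedBall] at hz ⊢
      rw [Metric.mem_ball] at hy
      calc dist z x ≤ dist z y + dist y x := dist_triangle _ _ _
        _ ≤ ε / 2 + ε / 2 := add_le_add hz hy.le
        _ = ε := by ring
    · intro q hq
      apply hjoin
      refine ⟨?_, hq.2⟩
      have h1 : dist q y < ε / 2 := Metric.mem_ball.1 hq.1
      have h2 : dist y x < ε / 2 := Metric.mem_ball.1 hy
      rw [Metric.mem_ball]
      calc dist q x ≤ dist q y + dist y x := dist_triangle _ _ _
        _ < ε / 2 + ε / 2 := add_lt_add h1 h2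
        _ = ε := by ring
  have haT : a ∈ T := by
    obtain ⟨ε', hε', hsub'⟩ := Metric.isOpen_iff.1 hEclosed a haΩE
    refine ⟨haΩE.1, ε' / 2, by positivity, ?_, ?_⟩
    · exact fun z hz => (hsub' (lt_of_le_of_lt (Metric.mem_closedBall.1 hz) (by linarith))).1
    · intro q hq
      apply JoinedIn.of_segment_subset
      intro z hz
      apply hsub'
      have h1 : z ∈ Metric.ball a (ε' / 2) :=
        (convex_ball a (ε' / 2)).segment_subset (Metric.mem_ball_self (by positivity)) hq.1 hz
      exact lt_of_lt_of_le (Metric.mem_ball.1 h1) (by linarith)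
  have hclosure : Ω ∩ closure T ⊆ T := by
    rintro x ⟨hxΩ, hxcl⟩
    obtain ⟨ε', hε', hb'⟩ := Metric.isOpen_iff.1 hΩ x hxΩ
    have hε : 0 < ε' / 2 := by positivity
    have hsub : Metric.closedBall x (ε' / 2) ⊆ Ω :=
      le_trans (Metric.closedBall_subset_ball (by linarith)) hb'
    set ε := ε' / 2
    obtain ⟨y, hyT, hyd⟩ := Metric.mem_closure_iff.1 hxcl ε hε
    obtain ⟨hyΩ, εy, hεy, hysub, hyjoin⟩ := hyT
    have hopen : IsOpen (Metric.ball y εy ∩ Metric.ball x ε) :=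
      Metric.isOpen_ball.inter Metric.isOpen_ball
    have hne : (Metric.ball y εy ∩ Metric.ball x ε).Nonempty :=
      ⟨y, Metric.mem_ball_self hεy, by
        rw [Metric.mem_ball, dist_comm]; exact hyd⟩
    obtain ⟨q, ⟨hq1, hq2⟩, hqE⟩ := hdense _ hopen hne
    have hjq : JoinedIn (Ω \ E) a q := hyjoin q ⟨hq1, hqE⟩
    refine ⟨hxΩ, ε, hε, hsub, ?_⟩
    intro q' hq'
    exact hjq.trans (hball x ε hε hsub q q' ⟨hq2, hqE⟩ hq')
  have hTeq : Ω ⊆ T := by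
    by_contra hns
    have hcov : Ω ⊆ T ∪ (closure T)ᶜ := by
      intro x hx
      by_cases h : x ∈ closure T
      · exact Or.inl (hclosure ⟨hx, h⟩)
      · exact Or.inr h
    have hu1 : (Ω ∩ T).Nonempty := ⟨a, haΩE.1, haT⟩
    have hu2 : (Ω ∩ (closure T)ᶜ).Nonempty := by
      rw [Set.not_subset] at hns
      obtain ⟨x, hxΩ, hxT⟩ := hns
      exact ⟨x, hxΩ, fun hc => hxT (hclosure ⟨hxΩ, hc⟩)⟩
    obtain ⟨z, hzΩ, hzT, hzc⟩ := hconn.isPreconnected T (closure T)ᶜ hTopen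
      isClosed_closure.isOpen_compl hcov hu1 hu2
    exact hzc (subset_closure hzT)
  refine IsPathConnected.isConnected ⟨a, haΩE, ?_⟩
  intro y hy
  obtain ⟨_, ε, hε, hsub, hjoin⟩ := hTeq hy.1
  exact hjoin y ⟨Metric.mem_ball_self hε, hy.2⟩
end

section
/- Let J and K be closed subsets of the unit disc Δ ⊆ C with H^1(J) = H^1(K) = 0, and set E = (J × Δ) ∩ (Δ × K) = J × K ⊆ Δ². Then E is removable for holomorphic functions: every f holomorphic on Δ² \ E extends holomorphically to Δ². -/
open MeasureTheory Set Metric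

namespace ProdRemovable

open Complex ContinuousLinearMap intervalIntegral

noncomputable def cint (f : ℂ × ℂ → ℂ) (r : ℝ) (p : ℂ × ℂ) : ℂ :=
  (2 * Real.pi * Complex.I)⁻¹ • ∮ ζ in C(0, r), (ζ - p.2)⁻¹ • f (p.1, ζ)

lemma dense_compl {J : Set ℂ} (hJH : μH[1] J = 0) :
    ball (0 : ℂ) 1 ⊆ closure (ball (0 : ℂ) 1 \ J) := by
  intro z hz
  rw [_root_.mem_closure_iff]
  intro o ho hzo
  by_contra hne
  have hsub : o ∩ ball (0 : ℂ) 1 ⊆ J := by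
    intro x hx
    by_contra hxJ
    exact hne ⟨x, hx.1, hx.2, hxJ⟩
  obtain ⟨ε, hε, hb⟩ := Metric.isOpen_iff.1 (ho.inter isOpen_ball) z ⟨hzo, hz⟩
  -- the segment from z to z + ε/2 is inside ball z ε hence inside J
  have hseg : segment ℝ z (z + (ε/2 : ℝ)) ⊆ J := by
    intro x hx
    apply hsub; apply hb
    have : dist x z < ε := by
      rcases hx with ⟨a, b, ha, hb', hab, rfl⟩
      have : a • z + b • (z + (ε/2:ℝ)) - z = b • ((ε/2 : ℝ) : ℂ) := by
        have hz' : a • z + b • (z + ((ε/2:ℝ):ℂ)) = (a+b) • z + b • ((ε/2:ℝ):ℂ) := by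
          simp [smul_add]; ring
        rw [hz', hab, one_smul]; ring
      rw [dist_eq, this]
      have hb1 : b ≤ 1 := by linarith
      have : ‖(b • ((ε/2:ℝ):ℂ))‖ = b * (ε/2) := by
        rw [norm_smul, Complex.norm_real, Real.norm_eq_abs, Real.norm_eq_abs, _root_.abs_of_nonneg hb',
          _root_.abs_of_nonneg (by linarith : (0:ℝ) ≤ ε/2)]
      rw [this]
      nlinarith
    exact mem_ball.2 this
  have h0 : μH[1] (segment ℝ z (z + (ε/2 : ℝ))) ≤ μH[1] J := measure_mono hseg
  rw [hJH, MeasureTheory.hausdorffMeasure_segment] at h0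
  simp only [nonpos_iff_eq_zero, edist_eq_zero] at h0
  have hc : ((ε/2:ℝ):ℂ) = 0 := left_eq_add.mp h0
  rw [Complex.ofReal_eq_zero] at hc
  linarith

/-- Existence of good radii avoiding `K`. -/
lemma exists_radius {K : Set ℂ} (hKH : μH[1] K = 0) {t : ℝ} (ht : t < 1) :
    ∃ r : ℝ, t < r ∧ r < 1 ∧ ∀ ζ ∈ sphere (0 : ℂ) r, ζ ∉ K := by
  have h1 : μH[1] ((fun z : ℂ => ‖z‖) '' K) = 0 := by
    have hl : LipschitzWith 1 (fun z : ℂ => ‖z‖) := lipschitzWith_one_norm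
    have h := hl.hausdorffMeasure_image_le zero_le_one K
    rw [hKH] at h
    simpa using nonpos_iff_eq_zero.1 (le_trans h (by simp))
  rw [MeasureTheory.hausdorffMeasure_real] at h1
  have h2 : volume (Ioo (max t 0) 1) ≠ 0 := by
    rw [Real.volume_Ioo]
    simp only [ne_eq, ENNReal.ofReal_eq_zero, not_le, sub_pos]
    exact max_lt ht one_pos
  have h3 : ¬ (Ioo (max t 0) 1 ⊆ (fun z : ℂ => ‖z‖) '' K) := by
    intro h
    exact h2 (measure_mono_null h h1)
  rw [Set.not_subset] at h3
  obtain ⟨r, hr, hrK⟩ := h3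
  refine ⟨r, lt_of_le_of_lt (le_max_left _ _) hr.1, hr.2, ?_⟩
  intro ζ hζ hζK
  exact hrK ⟨ζ, hζK, by simpa using hζ⟩


/-- Continuity in the second variable of the partial derivative in the first variable,
for a function holomorphic on an open set. -/
lemma contAt_partial {f : ℂ × ℂ → ℂ} {Ω : Set (ℂ × ℂ)} (hΩ : IsOpen Ω)
    (hf : DifferentiableOn ℂ f Ω) {z ζ₀ : ℂ} (h : (z, ζ₀) ∈ Ω) :
    ContinuousAt (fun ζ => deriv (fun x => f (x, ζ)) z) ζ₀ := by
  obtain ⟨ε, hε, hball⟩ := Metric.isOpen_iff.1 hΩ _ h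
  set ρ := ε / 2 with hρdef
  have hρ : 0 < ρ := half_pos hε
  have hsub : ∀ x ζ, x ∈ closedBall z ρ → ζ ∈ closedBall ζ₀ ρ → (x, ζ) ∈ Ω := by
    intro x ζ hx hζ
    apply hball
    rw [mem_ball, Prod.dist_eq]
    exact max_lt (lt_of_le_of_lt hx (by simp [hρdef]; linarith))
      (lt_of_le_of_lt hζ (by simp [hρdef]; linarith))
  -- slices are differentiable
  have hslice : ∀ ζ ∈ closedBall ζ₀ ρ, ∀ x ∈ closedBall z ρ,
      DifferentiableAt ℂ (fun x => f (x, ζ)) x := by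
    intro ζ hζ x hx
    exact (hf.differentiableAt (hΩ.mem_nhds (hsub x ζ hx hζ))).comp x
      (differentiableAt_id.prodMk (differentiableAt_const _))
  -- Cauchy representation of the derivative
  have hrep : ∀ ζ ∈ ball ζ₀ ρ, deriv (fun x => f (x, ζ)) z
      = (2 * Real.pi * Complex.I)⁻¹ • ∮ x in C(z, ρ), (x - z) ^ (-2 : ℤ) • f (x, ζ) := by
    intro ζ hζ
    suffices hdc : DiffContOnCl ℂ (fun x => f (x, ζ)) (ball z ρ) by
      have e := hdc.deriv_eq_smul_circleIntegral hρ
      have e2 : (∮ x in C(z, ρ), (x - z) ^ (-2 : ℤ) • f (x, ζ))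
          = ∮ x in C(z, ρ), (1 / (x - z) ^ 2) • f (x, ζ) := by
        simp only [zpow_neg, one_div, zpow_ofNat]
      rw [e2, e, smul_smul, inv_mul_cancel₀ two_pi_I_ne_zero, one_smul]
    have hdiff : DifferentiableOn ℂ (fun x => f (x, ζ)) (closedBall z ρ) := fun x hx =>
      (hslice ζ (ball_subset_closedBall hζ) x hx).differentiableWithinAt
    rw [← closure_ball z hρ.ne'] at hdiff
    exact hdiff.diffContOnCl
  -- bound for f on a compact set
  obtain ⟨M, hM⟩ := (isCompact_closedBall z ρ |>.prod (isCompact_closedBall ζ₀ ρ)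
    ).exists_bound_of_continuousOn (hf.continuousOn.mono
      (fun q hq => hsub q.1 q.2 hq.1 hq.2))
  -- continuity of the integral representation
  have hcont : ContinuousAt (fun ζ => (2 * Real.pi * Complex.I)⁻¹ •
      ∮ x in C(z, ρ), (x - z) ^ (-2 : ℤ) • f (x, ζ)) ζ₀ := by
    apply ContinuousAt.fun_const_smul
    simp only [circleIntegral, deriv_circleMap]
    apply intervalIntegral.continuousAt_of_dominated_interval
      (bound := fun _ => ρ * ((ρ ^ 2)⁻¹ * M))
    · filter_upwards [ball_mem_nhds ζ₀ hρ] with ζ hζ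
      apply Continuous.aestronglyMeasurable
      rw [continuous_iff_continuousAt]
      intro θ
      have h1 : ContinuousAt (fun θ : ℝ => f (circleMap z ρ θ, ζ)) θ := by
        have hc : ContinuousAt f (circleMap z ρ θ, ζ) :=
          hf.continuousOn.continuousAt (hΩ.mem_nhds (hsub _ _
            (sphere_subset_closedBall (circleMap_mem_sphere z hρ.le θ))
            (ball_subset_closedBall hζ)))
        exact hc.tendsto.comp (((continuous_circleMap z ρ).continuousAt.prodMk
          continuousAt_const : ContinuousAt (fun θ : ℝ => (circleMap z ρ θ, ζ)) θ))
      have h2 : ContinuousAt (fun θ : ℝ => (circleMap z ρ θ - z) ^ (-2 : ℤ)) θ := by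
        apply ContinuousAt.zpow₀
        · exact ((continuous_circleMap z ρ).continuousAt.sub continuousAt_const)
        · left; exact sub_ne_zero.2 (circleMap_ne_center hρ.ne')
      exact (((continuous_circleMap 0 ρ).continuousAt.mul continuousAt_const).smul
        (h2.smul h1))
    · filter_upwards [ball_mem_nhds ζ₀ hρ] with ζ hζ
      filter_upwards [] with θ _
      have habs : ‖circleMap z ρ θ - z‖ = ρ := by
        simp [circleMap_sub_center, norm_circleMap_zero, abs_of_pos hρ]
      rw [norm_smul, norm_smul]
      have h1 : ‖circleMap 0 ρ θ * Complex.I‖ = ρ := by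
        simp [norm_circleMap_zero, abs_of_pos hρ]
      have h2 : ‖(circleMap z ρ θ - z) ^ (-2 : ℤ)‖ = (ρ ^ 2)⁻¹ := by
        rw [norm_zpow]
        simp only [habs, zpow_neg, zpow_ofNat]
      rw [h1, h2]
      exact mul_le_mul_of_nonneg_left (mul_le_mul_of_nonneg_left
        (hM _ ⟨sphere_subset_closedBall (circleMap_mem_sphere z hρ.le θ),
          ball_subset_closedBall hζ⟩) (by positivity)) hρ.le
    · exact intervalIntegrable_const
    · filter_upwards [] with θ _
      have hc : ContinuousAt f (circleMap z ρ θ, ζ₀) :=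
        hf.continuousOn.continuousAt (hΩ.mem_nhds (hsub _ _
          (sphere_subset_closedBall (circleMap_mem_sphere z hρ.le θ))
          (mem_closedBall_self hρ.le)))
      exact ContinuousAt.fun_smul continuousAt_const (ContinuousAt.fun_smul continuousAt_const
        (hc.tendsto.comp ((continuousAt_const.prodMk continuousAt_id :
          ContinuousAt (fun ζ : ℂ => (circleMap z ρ θ, ζ)) ζ₀))))
  exact hcont.congr (Filter.eventuallyEq_of_mem (ball_mem_nhds ζ₀ hρ) fun ζ hζ =>
    (hrep ζ hζ).symm)

/-- The Cauchy-type integral is (jointly) differentiable. -/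
lemma cint_differentiableAt {f : ℂ × ℂ → ℂ} {Ω : Set (ℂ × ℂ)} (hΩ : IsOpen Ω)
    (hf : DifferentiableOn ℂ f Ω) {r : ℝ} (hr0 : 0 < r) (hr1 : r < 1)
    (hΩ₁ : ∀ x ∈ ball (0 : ℂ) 1, ∀ ζ ∈ sphere (0 : ℂ) r, (x, ζ) ∈ Ω)
    {p₀ : ℂ × ℂ} (hp₀ : p₀ ∈ ball (0 : ℂ) 1 ×ˢ ball (0 : ℂ) r) :
    DifferentiableAt ℂ (cint f r) p₀ := by
  obtain ⟨hz₀, hw₀⟩ := hp₀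
  set z₀ := p₀.1 with hz₀def
  set w₀ := p₀.2 with hw₀def
  set δ : ℝ := (1 - ‖z₀‖) / 2 with hδdef
  have hz₀n : ‖z₀‖ < 1 := by simpa [mem_ball, dist_eq_norm] using hz₀
  have hw₀n : ‖w₀‖ < r := by simpa [mem_ball, dist_eq_norm] using hw₀
  have hδ : 0 < δ := by rw [hδdef]; linarith
  have hδball : closedBall z₀ δ ⊆ ball (0 : ℂ) 1 := by
    intro x hx
    rw [mem_closedBall, dist_eq_norm] at hx
    rw [mem_ball, dist_eq_norm, sub_zero]
    have h1 := norm_le_insert' x z₀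
    rw [hδdef] at hx
    linarith
  set d : ℝ := (r - ‖w₀‖) / 2 with hddef
  have hd : 0 < d := by rw [hddef]; linarith
  set ε : ℝ := min (δ / 2) d with hεdef
  have hε : 0 < ε := lt_min (by linarith) hd
  have hsphere : ∀ θ : ℝ, circleMap 0 r θ ∈ sphere (0 : ℂ) r :=
    fun θ => circleMap_mem_sphere 0 hr0.le θ
  -- bound on f over a compact set
  obtain ⟨M₀, hM₀⟩ := ((isCompact_closedBall z₀ δ).prod (isCompact_sphere (0 : ℂ) r)
    ).exists_bound_of_continuousOn (hf.continuousOn.mono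
      (fun q hq => hΩ₁ q.1 (hδball hq.1) q.2 hq.2))
  set M : ℝ := max M₀ 0 with hMdef
  have hM : ∀ x ∈ closedBall z₀ δ, ∀ ζ ∈ sphere (0 : ℂ) r, ‖f (x, ζ)‖ ≤ M :=
    fun x hx ζ hζ => le_trans (hM₀ (x, ζ) ⟨hx, hζ⟩) (le_max_left _ _)
  have hMnn : 0 ≤ M := le_max_right _ _
  set M₂ : ℝ := M / (δ / 2) with hM₂def
  have hM₂nn : 0 ≤ M₂ := by rw [hM₂def]; exact div_nonneg hMnn (by linarith)
  -- bound on the partial derivative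
  have hderiv_bound : ∀ x ∈ ball z₀ (δ / 2), ∀ ζ ∈ sphere (0 : ℂ) r,
      ‖deriv (fun t => f (t, ζ)) x‖ ≤ M₂ := by
    intro x hx ζ hζ
    have hxball : closedBall x (δ / 2) ⊆ closedBall z₀ δ := by
      intro t ht
      rw [mem_closedBall] at ht ⊢
      rw [mem_ball] at hx
      calc dist t z₀ ≤ dist t x + dist x z₀ := dist_triangle t x z₀
      _ ≤ δ / 2 + δ / 2 := by linarith
      _ = δ := by ring
    have hdiff : DifferentiableOn ℂ (fun t => f (t, ζ)) (closedBall x (δ / 2)) := by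
      intro t ht
      exact ((hf.differentiableAt (hΩ.mem_nhds
        (hΩ₁ t (hδball (hxball ht)) ζ hζ))).comp t
        (differentiableAt_id.prodMk (differentiableAt_const _))).differentiableWithinAt
    have hdc : DiffContOnCl ℂ (fun t => f (t, ζ)) (ball x (δ / 2)) := by
      rw [← closure_ball x (by positivity : (δ:ℝ)/2 ≠ 0)] at hdiff
      exact hdiff.diffContOnCl
    have := Complex.norm_deriv_le_of_forall_mem_sphere_norm_le (by linarith : (0:ℝ) < δ/2)
      hdc (fun t ht => hM t (hxball (sphere_subset_closedBall ht)) ζ hζ)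
    simpa [hM₂def] using this
  -- the parametrized integrand and its derivative
  set G : (ℂ × ℂ) → ℝ → ℂ := fun p θ =>
    (circleMap 0 r θ * Complex.I) * ((circleMap 0 r θ - p.2)⁻¹ * f (p.1, circleMap 0 r θ))
    with hGdef
  set G' : (ℂ × ℂ) → ℝ → ((ℂ × ℂ) →L[ℂ] ℂ) := fun p θ =>
    (circleMap 0 r θ * Complex.I) •
      (((circleMap 0 r θ - p.2)⁻¹) •
          ((deriv (fun x => f (x, circleMap 0 r θ)) p.1) • ContinuousLinearMap.fst ℂ ℂ ℂ)
        + f (p.1, circleMap 0 r θ) •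
          ((-((circleMap 0 r θ - p.2) ^ 2)⁻¹) • (-ContinuousLinearMap.snd ℂ ℂ ℂ)))
    with hG'def
  -- membership facts for p in the ε-ball around p₀
  have hmem : ∀ p ∈ ball p₀ ε, p.1 ∈ ball z₀ (δ / 2) ∧ ‖p.2 - w₀‖ < ε := by
    intro p hp
    rw [mem_ball, Prod.dist_eq, max_lt_iff] at hp
    constructor
    · rw [mem_ball]
      exact lt_of_lt_of_le hp.1 (min_le_left _ _)
    · rw [← dist_eq_norm]; exact hp.2
  have hp1ball : ∀ p ∈ ball p₀ ε, p.1 ∈ ball (0 : ℂ) 1 := fun p hp =>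
    hδball ((closedBall_subset_closedBall (by linarith : δ/2 ≤ δ))
      (ball_subset_closedBall (hmem p hp).1))
  have hsep : ∀ p ∈ ball p₀ ε, ∀ θ : ℝ, d ≤ ‖circleMap 0 r θ - p.2‖ := by
    intro p hp θ
    have h2 := (hmem p hp).2
    have habs : ‖circleMap 0 r θ‖ = r := by
      simp [norm_circleMap_zero, abs_of_pos hr0]
    have hp2 : ‖p.2‖ < ‖w₀‖ + ε := by
      have := norm_le_insert' p.2 w₀
      linarith
    have hεd : ε ≤ d := min_le_right _ _
    have htri := norm_sub_norm_le (circleMap 0 r θ) p.2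
    rw [habs] at htri
    have hd' : d = (r - ‖w₀‖) / 2 := hddef
    linarith
  have hne : ∀ p ∈ ball p₀ ε, ∀ θ : ℝ, circleMap 0 r θ - p.2 ≠ 0 := by
    intro p hp θ h0
    have := hsep p hp θ
    rw [h0, norm_zero] at this
    linarith
  -- continuity in θ of G p for suitable p
  have hGcont : ∀ p ∈ ball p₀ ε, Continuous (G p) := by
    intro p hp
    rw [continuous_iff_continuousAt]
    intro θ
    have hfc : ContinuousAt f (p.1, circleMap 0 r θ) :=
      hf.continuousOn.continuousAt (hΩ.mem_nhds (hΩ₁ p.1 (hp1ball p hp) _ (hsphere θ)))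
    have h1 : ContinuousAt (fun θ : ℝ => f (p.1, circleMap 0 r θ)) θ :=
      hfc.tendsto.comp ((continuousAt_const.prodMk (continuous_circleMap 0 r).continuousAt :
        ContinuousAt (fun θ : ℝ => (p.1, circleMap 0 r θ)) θ))
    exact (((continuous_circleMap 0 r).continuousAt.mul continuousAt_const).mul
      (((((continuous_circleMap 0 r).continuousAt.sub continuousAt_const).inv₀
        (hne p hp θ))).mul h1))
  -- the fderiv statement
  have hG_deriv : ∀ θ : ℝ, ∀ p ∈ ball p₀ ε, HasFDerivAt (fun q => G q θ) (G' p θ) p := by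
    intro θ p hp
    have hslice : DifferentiableAt ℂ (fun x => f (x, circleMap 0 r θ)) p.1 :=
      (hf.differentiableAt (hΩ.mem_nhds (hΩ₁ p.1 (hp1ball p hp) _ (hsphere θ)))).comp p.1
        (differentiableAt_id.prodMk (differentiableAt_const _))
    have hv : HasFDerivAt (fun q : ℂ × ℂ => f (q.1, circleMap 0 r θ))
        ((deriv (fun x => f (x, circleMap 0 r θ)) p.1) • ContinuousLinearMap.fst ℂ ℂ ℂ) p :=
      HasDerivAt.comp_hasFDerivAt p hslice.hasDerivAt hasFDerivAt_fst
    have hinner : HasFDerivAt (fun q : ℂ × ℂ => circleMap 0 r θ - q.2)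
        (-ContinuousLinearMap.snd ℂ ℂ ℂ) p := (hasFDerivAt_snd).const_sub _
    have hinv : HasDerivAt (fun y : ℂ => y⁻¹) (-((circleMap 0 r θ - p.2) ^ 2)⁻¹)
        (circleMap 0 r θ - p.2) := hasDerivAt_inv (hne p hp θ)
    have hu : HasFDerivAt (fun q : ℂ × ℂ => (circleMap 0 r θ - q.2)⁻¹)
        ((-((circleMap 0 r θ - p.2) ^ 2)⁻¹) • (-ContinuousLinearMap.snd ℂ ℂ ℂ)) p :=
      HasDerivAt.comp_hasFDerivAt p hinv hinner
    exact (hu.mul hv).const_mul (circleMap 0 r θ * Complex.I)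
  -- the norm bound on G'
  set B : ℝ := r * (d⁻¹ * (M₂ * 1) + M * ((d ^ 2)⁻¹ * 1)) with hBdef
  have hG'_bound : ∀ θ : ℝ, ∀ p ∈ ball p₀ ε, ‖G' p θ‖ ≤ B := by
    intro θ p hp
    have habs : ‖circleMap 0 r θ * Complex.I‖ = r := by
      simp [norm_circleMap_zero, abs_of_pos hr0]
    have hd1 : ‖(circleMap 0 r θ - p.2)⁻¹‖ ≤ d⁻¹ := by
      rw [norm_inv]
      exact inv_anti₀ hd (hsep p hp θ)
    have hd2 : ‖(-((circleMap 0 r θ - p.2) ^ 2)⁻¹)‖ ≤ (d ^ 2)⁻¹ := by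
      rw [norm_neg, norm_inv, norm_pow]
      exact inv_anti₀ (by positivity) (pow_le_pow_left₀ hd.le (hsep p hp θ) 2)
    have hfb : ‖f (p.1, circleMap 0 r θ)‖ ≤ M :=
      hM p.1 ((closedBall_subset_closedBall (by linarith : δ/2 ≤ δ))
        (ball_subset_closedBall (hmem p hp).1)) _ (hsphere θ)
    have hdb : ‖deriv (fun x => f (x, circleMap 0 r θ)) p.1‖ ≤ M₂ :=
      hderiv_bound p.1 (hmem p hp).1 _ (hsphere θ)
    have hfst : ‖ContinuousLinearMap.fst ℂ ℂ ℂ‖ ≤ 1 := ContinuousLinearMap.norm_fst_le ℂ ℂ ℂ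
    have hsnd : ‖-ContinuousLinearMap.snd ℂ ℂ ℂ‖ ≤ 1 := by
      rw [norm_neg]; exact ContinuousLinearMap.norm_snd_le ℂ ℂ ℂ
    have hA : ‖((circleMap 0 r θ - p.2)⁻¹) •
        ((deriv (fun x => f (x, circleMap 0 r θ)) p.1) • ContinuousLinearMap.fst ℂ ℂ ℂ)‖
        ≤ d⁻¹ * (M₂ * 1) := by
      have e1 : ‖((circleMap 0 r θ - p.2)⁻¹) •
          ((deriv (fun x => f (x, circleMap 0 r θ)) p.1) • ContinuousLinearMap.fst ℂ ℂ ℂ)‖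
          = ‖(circleMap 0 r θ - p.2)⁻¹‖ *
            ‖(deriv (fun x => f (x, circleMap 0 r θ)) p.1) • ContinuousLinearMap.fst ℂ ℂ ℂ‖ :=
        norm_smul ((circleMap 0 r θ - p.2)⁻¹)
          ((deriv (fun x => f (x, circleMap 0 r θ)) p.1) • ContinuousLinearMap.fst ℂ ℂ ℂ)
      have e2 : ‖(deriv (fun x => f (x, circleMap 0 r θ)) p.1) • ContinuousLinearMap.fst ℂ ℂ ℂ‖
          = ‖deriv (fun x => f (x, circleMap 0 r θ)) p.1‖ * ‖ContinuousLinearMap.fst ℂ ℂ ℂ‖ :=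
        norm_smul (deriv (fun x => f (x, circleMap 0 r θ)) p.1) (ContinuousLinearMap.fst ℂ ℂ ℂ)
      rw [e1, e2]
      exact mul_le_mul hd1 (mul_le_mul hdb hfst (norm_nonneg _) hM₂nn)
        (by positivity) (by positivity)
    have hB2 : ‖f (p.1, circleMap 0 r θ) •
        ((-((circleMap 0 r θ - p.2) ^ 2)⁻¹) • (-ContinuousLinearMap.snd ℂ ℂ ℂ))‖
        ≤ M * ((d ^ 2)⁻¹ * 1) := by
      have e1 : ‖f (p.1, circleMap 0 r θ) •
          ((-((circleMap 0 r θ - p.2) ^ 2)⁻¹) • (-ContinuousLinearMap.snd ℂ ℂ ℂ))‖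
          = ‖f (p.1, circleMap 0 r θ)‖ *
            ‖(-((circleMap 0 r θ - p.2) ^ 2)⁻¹) • (-ContinuousLinearMap.snd ℂ ℂ ℂ)‖ :=
        norm_smul (f (p.1, circleMap 0 r θ))
          ((-((circleMap 0 r θ - p.2) ^ 2)⁻¹) • (-ContinuousLinearMap.snd ℂ ℂ ℂ))
      have e2 : ‖(-((circleMap 0 r θ - p.2) ^ 2)⁻¹) • (-ContinuousLinearMap.snd ℂ ℂ ℂ)‖
          = ‖(-((circleMap 0 r θ - p.2) ^ 2)⁻¹)‖ * ‖-ContinuousLinearMap.snd ℂ ℂ ℂ‖ :=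
        norm_smul (-((circleMap 0 r θ - p.2) ^ 2)⁻¹) (-ContinuousLinearMap.snd ℂ ℂ ℂ)
      rw [e1, e2]
      exact mul_le_mul hfb (mul_le_mul hd2 hsnd (norm_nonneg _) (by positivity))
        (by positivity) hMnn
    simp only [hG'def]
    have e0 : ‖(circleMap 0 r θ * Complex.I) •
        (((circleMap 0 r θ - p.2)⁻¹) •
            ((deriv (fun x => f (x, circleMap 0 r θ)) p.1) • ContinuousLinearMap.fst ℂ ℂ ℂ)
          + f (p.1, circleMap 0 r θ) •
            ((-((circleMap 0 r θ - p.2) ^ 2)⁻¹) • (-ContinuousLinearMap.snd ℂ ℂ ℂ)))‖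
        = ‖circleMap 0 r θ * Complex.I‖ *
          ‖((circleMap 0 r θ - p.2)⁻¹) •
            ((deriv (fun x => f (x, circleMap 0 r θ)) p.1) • ContinuousLinearMap.fst ℂ ℂ ℂ)
          + f (p.1, circleMap 0 r θ) •
            ((-((circleMap 0 r θ - p.2) ^ 2)⁻¹) • (-ContinuousLinearMap.snd ℂ ℂ ℂ))‖ :=
      norm_smul (circleMap 0 r θ * Complex.I)
        (((circleMap 0 r θ - p.2)⁻¹) •
            ((deriv (fun x => f (x, circleMap 0 r θ)) p.1) • ContinuousLinearMap.fst ℂ ℂ ℂ)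
          + f (p.1, circleMap 0 r θ) •
            ((-((circleMap 0 r θ - p.2) ^ 2)⁻¹) • (-ContinuousLinearMap.snd ℂ ℂ ℂ)))
    rw [e0, habs]
    exact mul_le_mul_of_nonneg_left
      (le_trans (norm_add_le _ _) (add_le_add hA hB2)) hr0.le
  -- measurability of G' p₀
  have hG'_cont : Continuous (G' p₀) := by
    rw [continuous_iff_continuousAt]
    intro θ
    have hd_cont : ContinuousAt (fun θ : ℝ => deriv (fun x => f (x, circleMap 0 r θ)) z₀) θ := by
      have h := contAt_partial hΩ hf (hΩ₁ z₀ hz₀ _ (hsphere θ))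
      exact h.tendsto.comp (continuous_circleMap 0 r).continuousAt
    have hfc : ContinuousAt f (z₀, circleMap 0 r θ) :=
      hf.continuousOn.continuousAt (hΩ.mem_nhds (hΩ₁ z₀ hz₀ _ (hsphere θ)))
    have h1 : ContinuousAt (fun θ : ℝ => f (z₀, circleMap 0 r θ)) θ :=
      hfc.tendsto.comp ((continuousAt_const.prodMk (continuous_circleMap 0 r).continuousAt :
        ContinuousAt (fun θ : ℝ => (z₀, circleMap 0 r θ)) θ))
    have hp₀ball : p₀ ∈ ball p₀ ε := mem_ball_self hε
    apply ContinuousAt.fun_smul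
    · exact (continuous_circleMap 0 r).continuousAt.mul continuousAt_const
    apply ContinuousAt.fun_add
    · apply ContinuousAt.fun_smul
      · exact ((continuous_circleMap 0 r).continuousAt.sub continuousAt_const).inv₀
          (hne p₀ hp₀ball θ)
      · exact hd_cont.smul continuousAt_const
    · apply ContinuousAt.fun_smul h1
      apply ContinuousAt.fun_smul _ continuousAt_const
      exact (((((continuous_circleMap 0 r).continuousAt.sub continuousAt_const).pow 2).inv₀
        (pow_ne_zero 2 (hne p₀ hp₀ball θ))).neg)
  -- apply the parametric differentiation theorem
  have key : HasFDerivAt (fun p => ∫ θ in (0 : ℝ)..(2 * Real.pi), G p θ)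
      (∫ θ in (0 : ℝ)..(2 * Real.pi), G' p₀ θ) p₀ := by
    refine intervalIntegral.hasFDerivAt_integral_of_dominated_of_fderiv_le
      (F := G) (F' := G') (bound := fun _ => B) (ball_mem_nhds p₀ hε) ?_ ?_ ?_ ?_ ?_ ?_
    · filter_upwards [ball_mem_nhds p₀ hε] with p hp
      exact (hGcont p hp).aestronglyMeasurable
    · exact (hGcont p₀ (mem_ball_self hε)).intervalIntegrable _ _
    · exact hG'_cont.aestronglyMeasurable
    · filter_upwards [] with θ _ p hp
      exact hG'_bound θ p hp
    · exact intervalIntegrable_const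
    · filter_upwards [] with θ _ p hp
      exact hG_deriv θ p hp
  have hcint : cint f r = fun p => (2 * Real.pi * Complex.I)⁻¹ •
      ∫ θ in (0 : ℝ)..(2 * Real.pi), G p θ := by
    funext p
    rw [cint, circleIntegral]
    simp only [hGdef, deriv_circleMap, smul_eq_mul]
  rw [hcint]
  exact (key.const_smul ((2 * Real.pi * Complex.I)⁻¹ : ℂ)).differentiableAt


/-- Cauchy integral formula for slices with good first coordinate. -/
lemma cint_eq {f : ℂ × ℂ → ℂ} {Ω : Set (ℂ × ℂ)} (hΩ : IsOpen Ω)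
    (hf : DifferentiableOn ℂ f Ω) {r : ℝ} (hr1 : r < 1)
    {p : ℂ × ℂ} (hz : ∀ ζ ∈ ball (0 : ℂ) 1, (p.1, ζ) ∈ Ω)
    (hw : p.2 ∈ ball (0 : ℂ) r) :
    cint f r p = f p := by
  have hslice : DifferentiableOn ℂ (fun ζ => f (p.1, ζ)) (ball (0 : ℂ) 1) := by
    intro ζ hζ
    exact ((hf.differentiableAt (hΩ.mem_nhds (hz ζ hζ))).comp ζ
      ((differentiableAt_const _).prodMk differentiableAt_id)).differentiableWithinAt
  have key := Complex.two_pi_I_inv_smul_circleIntegral_sub_inv_smul_of_differentiable_on_off_countable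
    (s := ∅) countable_empty hw
    (hslice.continuousOn.mono (closedBall_subset_ball hr1))
    (fun x hx => hslice.differentiableAt (isOpen_ball.mem_nhds (ball_subset_ball hr1.le hx.1)))
  exact key

/-- Two functions continuous at a point in the closure of a set where they agree are equal
at that point. -/
lemma eq_of_cont_of_closure {X : Type*} [TopologicalSpace X] {g₁ g₂ : X → ℂ} {s : Set X}
    {p : X} (h₁ : ContinuousAt g₁ p) (h₂ : ContinuousAt g₂ p) (heq : EqOn g₁ g₂ s)
    (hp : p ∈ closure s) : g₁ p = g₂ p := by
  have hne : (nhdsWithin p s).NeBot := mem_closure_iff_nhdsWithin_neBot.1 hp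
  have hEv : g₂ =ᶠ[nhdsWithin p s] g₁ := by
    filter_upwards [self_mem_nhdsWithin] with x hx
    exact (heq hx).symm
  exact tendsto_nhds_unique (h₁.continuousWithinAt) ((h₂.continuousWithinAt).congr' hEv)

end ProdRemovable

open ProdRemovable

/-- Let `J, K` be closed subsets of the unit disc `Δ ⊆ ℂ` with `H^1(J) = H^1(K) = 0`
and let `E = (J × Δ) ∩ (Δ × K) = J × K ⊆ Δ²`.  Then `E` is removable for holomorphic
functions: every `f` holomorphic on `Δ² \ E` extends holomorphically to `Δ²`. -/
theorem product_removable (J K : Set ℂ)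
    (hJ : J ⊆ ball (0 : ℂ) 1) (hK : K ⊆ ball (0 : ℂ) 1)
    (hJclosed : IsOpen (ball (0 : ℂ) 1 \ J)) (hKclosed : IsOpen (ball (0 : ℂ) 1 \ K))
    (hJH : μH[1] J = 0) (hKH : μH[1] K = 0)
    (f : ℂ × ℂ → ℂ)
    (hf : DifferentiableOn ℂ f ((ball (0 : ℂ) 1 ×ˢ ball (0 : ℂ) 1) \ J ×ˢ K)) :
    ∃ F : ℂ × ℂ → ℂ, DifferentiableOn ℂ F (ball (0 : ℂ) 1 ×ˢ ball (0 : ℂ) 1) ∧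
      EqOn F f ((ball (0 : ℂ) 1 ×ˢ ball (0 : ℂ) 1) \ J ×ˢ K) := by
  classical
  set Ω : Set (ℂ × ℂ) := (ball (0 : ℂ) 1 ×ˢ ball (0 : ℂ) 1) \ J ×ˢ K with hΩdef
  have hΩopen : IsOpen Ω := by
    have hsplit : Ω = ((ball (0 : ℂ) 1 \ J) ×ˢ ball (0 : ℂ) 1)
        ∪ (ball (0 : ℂ) 1 ×ˢ (ball (0 : ℂ) 1 \ K)) := by
      ext p
      simp only [hΩdef, mem_diff, mem_prod, mem_union]
      tauto
    rw [hsplit]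
    exact (hJclosed.prod isOpen_ball).union (isOpen_ball.prod hKclosed)
  -- admissible radii
  have hrad : ∀ t : ℝ, t < 1 → ∃ r : ℝ, t < r ∧ r < 1 ∧ ∀ ζ ∈ sphere (0 : ℂ) r, ζ ∉ K :=
    fun t ht => exists_radius hKH ht
  choose R hR1 hR2 hR3 using hrad
  -- admissibility predicate
  set Adm : ℝ → Prop := fun r => 0 < r ∧ r < 1 ∧ ∀ ζ ∈ sphere (0 : ℂ) r, ζ ∉ K with hAdmdef
  have hΩ₁ : ∀ r : ℝ, Adm r → ∀ x ∈ ball (0 : ℂ) 1, ∀ ζ ∈ sphere (0 : ℂ) r, (x, ζ) ∈ Ω := by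
    intro r hr x hx ζ hζ
    have hζball : ζ ∈ ball (0 : ℂ) 1 := by
      rw [mem_ball] at hx ⊢
      rw [mem_sphere] at hζ
      rw [hζ]
      exact hr.2.1
    exact ⟨⟨hx, hζball⟩, fun hc => hr.2.2 ζ hζ hc.2⟩
  have hdiff : ∀ r : ℝ, Adm r → ∀ p ∈ ball (0 : ℂ) 1 ×ˢ ball (0 : ℂ) r,
      DifferentiableAt ℂ (cint f r) p :=
    fun r hr p hp => cint_differentiableAt hΩopen hf hr.1 hr.2.1 (hΩ₁ r hr) hp
  -- slices avoiding J
  have hzΩ : ∀ z ∈ ball (0 : ℂ) 1 \ J, ∀ ζ ∈ ball (0 : ℂ) 1, (z, ζ) ∈ Ω :=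
    fun z hz ζ hζ => ⟨⟨hz.1, hζ⟩, fun hc => hz.2 hc.1⟩
  -- cint agrees with f off the singular set
  have hEq : ∀ r : ℝ, Adm r →
      EqOn (cint f r) f ((ball (0 : ℂ) 1 ×ˢ ball (0 : ℂ) r) \ J ×ˢ K) := by
    intro r hr p hp
    obtain ⟨⟨hp1, hp2⟩, hpE⟩ := hp
    by_cases hzJ : p.1 ∈ J
    · have hwK : p.2 ∉ K := fun h => hpE ⟨hzJ, h⟩
      have hpΩ : p ∈ Ω := ⟨⟨hp1, ball_subset_ball hr.2.1.le hp2⟩, fun hc => hwK hc.2⟩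
      have hEqs : EqOn (cint f r) f ((ball (0 : ℂ) 1 \ J) ×ˢ ball (0 : ℂ) r) := by
        intro q hq
        exact cint_eq hΩopen hf hr.2.1 (hzΩ q.1 hq.1) hq.2
      have hcl : p ∈ closure ((ball (0 : ℂ) 1 \ J) ×ˢ ball (0 : ℂ) r) := by
        rw [closure_prod_eq]
        exact ⟨dense_compl hJH hp1, subset_closure hp2⟩
      exact eq_of_cont_of_closure (hdiff r hr p ⟨hp1, hp2⟩).continuousAt
        (hf.continuousOn.continuousAt (hΩopen.mem_nhds hpΩ)) hEqs hcl
    · exact cint_eq hΩopen hf hr.2.1 (hzΩ p.1 ⟨hp1, hzJ⟩) hp2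
  -- two admissible radii agree
  have hagree : ∀ r r' : ℝ, Adm r → Adm r' →
      EqOn (cint f r) (cint f r')
        (ball (0 : ℂ) 1 ×ˢ (ball (0 : ℂ) r ∩ ball (0 : ℂ) r')) := by
    intro r r' hr hr' p hp
    obtain ⟨hp1, hp2⟩ := hp
    have hEqs : EqOn (cint f r) (cint f r')
        ((ball (0 : ℂ) 1 \ J) ×ˢ (ball (0 : ℂ) r ∩ ball (0 : ℂ) r')) := by
      intro q hq
      rw [cint_eq hΩopen hf hr.2.1 (hzΩ q.1 hq.1) hq.2.1,
        cint_eq hΩopen hf hr'.2.1 (hzΩ q.1 hq.1) hq.2.2]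
    have hcl : p ∈ closure ((ball (0 : ℂ) 1 \ J) ×ˢ (ball (0 : ℂ) r ∩ ball (0 : ℂ) r')) := by
      rw [closure_prod_eq]
      exact ⟨dense_compl hJH hp1, subset_closure hp2⟩
    exact eq_of_cont_of_closure (hdiff r hr p ⟨hp1, hp2.1⟩).continuousAt
      (hdiff r' hr' p ⟨hp1, hp2.2⟩).continuousAt hEqs hcl
  -- the global extension
  refine ⟨fun p => if h : ‖p.2‖ < 1 then cint f (R ‖p.2‖ h) p else 0, ?_, ?_⟩
  · -- differentiability
    intro p hp
    obtain ⟨hp1, hp2⟩ := hp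
    have h2 : ‖p.2‖ < 1 := by simpa [mem_ball, dist_eq_norm] using hp2
    set r : ℝ := R ‖p.2‖ h2 with hrdef
    have hAr : Adm r := ⟨lt_of_le_of_lt (norm_nonneg _) (hR1 _ h2), hR2 _ h2, hR3 _ h2⟩
    have hpball : p ∈ ball (0 : ℂ) 1 ×ˢ ball (0 : ℂ) r :=
      ⟨hp1, by rw [mem_ball, dist_eq_norm, sub_zero]; exact hR1 _ h2⟩
    have hFeq : ∀ q ∈ ball (0 : ℂ) 1 ×ˢ ball (0 : ℂ) r,
        (fun p => if h : ‖p.2‖ < 1 then cint f (R ‖p.2‖ h) p else 0) q = cint f r q := by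
      intro q hq
      have hq2 : ‖q.2‖ < r := by
        have := hq.2; rwa [mem_ball, dist_eq_norm, sub_zero] at this
      have hq1 : ‖q.2‖ < 1 := lt_trans hq2 (hR2 _ h2)
      show (if h : ‖q.2‖ < 1 then cint f (R ‖q.2‖ h) q else 0) = cint f r q
      rw [dif_pos hq1]
      have hArq : Adm (R ‖q.2‖ hq1) :=
        ⟨lt_of_le_of_lt (norm_nonneg _) (hR1 _ hq1), hR2 _ hq1, hR3 _ hq1⟩
      exact hagree _ r hArq hAr ⟨hq.1, ⟨by
        rw [mem_ball, dist_eq_norm, sub_zero]; exact hR1 _ hq1, hq.2⟩⟩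
    have hopen : IsOpen (ball (0 : ℂ) 1 ×ˢ ball (0 : ℂ) r) := isOpen_ball.prod isOpen_ball
    have hev : (fun p => if h : ‖p.2‖ < 1 then cint f (R ‖p.2‖ h) p else 0)
        =ᶠ[nhds p] cint f r :=
      Filter.eventuallyEq_of_mem (hopen.mem_nhds hpball) hFeq
    exact ((hdiff r hAr p hpball).congr_of_eventuallyEq hev).differentiableWithinAt
  · -- agreement with f
    intro p hp
    obtain ⟨⟨hp1, hp2⟩, hpE⟩ := hp
    have h2 : ‖p.2‖ < 1 := by simpa [mem_ball, dist_eq_norm] using hp2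
    have hAr : Adm (R ‖p.2‖ h2) := ⟨lt_of_le_of_lt (norm_nonneg _) (hR1 _ h2),
      hR2 _ h2, hR3 _ h2⟩
    have : p ∈ (ball (0 : ℂ) 1 ×ˢ ball (0 : ℂ) (R ‖p.2‖ h2)) \ J ×ˢ K :=
      ⟨⟨hp1, by rw [mem_ball, dist_eq_norm, sub_zero]; exact hR1 _ h2⟩, hpE⟩
    simp only [dif_pos h2]
    exact hEq _ hAr this
end
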